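/- If w : (0,∞) → ℝ is a positive solution of w'' + ((n-1)/r + r/2) w' + w/(p-1) + w^p = 0 with n > 2, p > 1, and w is bounded on (0,1), then w'(r) = O(r) as r → 0⁺; i.e. there exist C, δ > 0 with |w'(r)| ≤ C r for 0 < r < δ. -/

import Mathlib

open Set Filter

theorem stmt1 (n : ℕ) (hn : 2 < n) (p : ℝ) (hp : 1 < p) (w : ℝ → ℝ)
    (hpos : ∀ r > 0, 0 < w r)
    (hC2 : ContDiffOn ℝ 2 w (Ioi 0))
    (heq : ∀ r > 0, deriv (deriv w) r + (((n : ℝ) - 1) / r + r / 2) * deriv w r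
      + w r / (p - 1) + w r ^ p = 0)
    (hdec : ∀ r > 0, deriv w r ≤ 0)
    (C₀ : ℝ) (hapriori : ∀ r ∈ Ioo (0:ℝ) 1,
      r ^ (2 / (p - 1)) * w r + r ^ (2 / (p - 1) + 1) * |deriv w r|
        + r ^ (2 / (p - 1) + 2) * |deriv (deriv w) r| ≤ C₀)
    (hbdd : ∃ B, ∀ r ∈ Ioo (0:ℝ) 1, w r ≤ B) :
    ∃ C > 0, ∃ δ > 0, ∀ r, 0 < r → r < δ → |deriv w r| ≤ C * r := by
  obtain ⟨m, rfl⟩ : ∃ m, n = m + 3 := ⟨n - 3, by omega⟩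
  obtain ⟨B₀, hB₀⟩ := hbdd
  obtain ⟨B, hB1, hB⟩ : ∃ B : ℝ, 1 ≤ B ∧ ∀ r ∈ Ioo (0:ℝ) 1, w r ≤ B :=
    ⟨max B₀ 1, le_max_right _ _, fun r hr => (hB₀ r hr).trans (le_max_left _ _)⟩
  have hBpos : (0:ℝ) < B := lt_of_lt_of_le one_pos hB1
  have hp0 : (0:ℝ) < p - 1 := by linarith
  obtain ⟨M, hM, hsrc⟩ : ∃ M : ℝ, 0 < M ∧ ∀ r ∈ Ioo (0:ℝ) 1,
      w r / (p-1) + w r ^ p ≤ M := by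
    refine ⟨B / (p - 1) + B ^ p,
      add_pos (div_pos hBpos hp0) (Real.rpow_pos_of_pos hBpos p), ?_⟩
    intro r hr
    have h2 : w r ^ p ≤ B ^ p :=
      Real.rpow_le_rpow (hpos r hr.1).le (hB r hr) (by linarith)
    have h3 : w r / (p-1) ≤ B / (p-1) := (div_le_div_iff_of_pos_right hp0).2 (hB r hr)
    linarith
  have hsrc0 : ∀ r > (0:ℝ), 0 ≤ w r / (p-1) + w r ^ p := by
    intro r hr
    have h1 := hpos r hr
    have h2 := Real.rpow_pos_of_pos h1 p
    positivity
  -- differentiability facts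
  have hdiff1 : ∀ r > (0:ℝ), HasDerivAt w (deriv w r) r := by
    intro r hr
    exact ((hC2.differentiableOn (by norm_num)).differentiableAt
      (isOpen_Ioi.mem_nhds hr)).hasDerivAt
  have hC2' : ContDiffOn ℝ 1 (deriv w) (Ioi 0) :=
    hC2.deriv_of_isOpen isOpen_Ioi (by norm_num)
  have hdiff2 : ∀ r > (0:ℝ), HasDerivAt (deriv w) (deriv (deriv w) r) r := by
    intro r hr
    exact ((hC2'.differentiableOn (by norm_num)).differentiableAt
      (isOpen_Ioi.mem_nhds hr)).hasDerivAt
  set K := M * Real.exp 1 with hKdef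
  have hK : 0 < K := mul_pos hM (Real.exp_pos 1)
  clear_value K
  set F : ℝ → ℝ := fun r => r ^ (m+2) * Real.exp (r^2/4) * deriv w r + (K / (m+3)) * r ^ (m+3)
    with hFdef
  have hFr : ∀ r : ℝ, F r = r ^ (m+2) * Real.exp (r^2/4) * deriv w r
      + (K / (m+3)) * r ^ (m+3) := fun r => rfl
  clear_value F
  have hkey : ∀ r ∈ Ioo (0:ℝ) 1, HasDerivAt F
      (K * r^(m+2) - r^(m+2) * Real.exp (r^2/4) * (w r/(p-1) + w r ^ p)) r := by
    intro r hr
    have hr0 := hr.1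
    have hrne : r ≠ 0 := ne_of_gt hr0
    have he : HasDerivAt (fun x : ℝ => Real.exp (x^2/4)) (Real.exp (r^2/4) * (2 * r^1 / 4)) r := by
      have h1 : HasDerivAt (fun x : ℝ => x^2/4) (2 * r^1 / 4) r := by
        simpa using (hasDerivAt_pow 2 r).div_const 4
      exact h1.exp
    have hv : HasDerivAt (fun x => x^(m+2) * Real.exp (x^2/4) * deriv w x)
        (((↑(m+2) * r^(m+1)) * Real.exp (r^2/4) + r^(m+2) * (Real.exp (r^2/4) * (2*r^1/4)))
          * deriv w r + r^(m+2) * Real.exp (r^2/4) * deriv (deriv w) r) r :=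
      ((hasDerivAt_pow (m+2) r).mul he).mul (hdiff2 r hr0)
    have hxn : HasDerivAt (fun x : ℝ => (K/(m+3)) * x ^ (m+3))
        ((K/(m+3)) * (↑(m+3) * r^(m+2))) r :=
      (hasDerivAt_pow (m+3) r).const_mul (K/(m+3))
    have hFd := hv.add hxn
    rw [hFdef]
    convert hFd using 1
    · rfl
    · rfl
    · rfl
    have heqr := heq r hr0
    have hd2 : deriv (deriv w) r = -(((↑(m+3):ℝ)-1)/r + r/2) * deriv w r
        - w r/(p-1) - w r ^ p := by linarith
    rw [hd2]
    have hm3 : ((m:ℝ)+3) ≠ 0 := by positivity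
    push_cast
    field_simp
    ring
  have hcont : ContinuousOn F (Ioo 0 1) :=
    fun r hr => ((hkey r hr).continuousAt.continuousWithinAt)
  have hmono : MonotoneOn F (Ioo 0 1) := by
    apply monotoneOn_of_deriv_nonneg (convex_Ioo 0 1) hcont
    · intro r hr
      rw [interior_Ioo] at hr
      exact (hkey r hr).differentiableAt.differentiableWithinAt
    · intro r hr
      rw [interior_Ioo] at hr
      rw [(hkey r hr).deriv]
      have hrp : (0:ℝ) ≤ r^(m+2) := pow_nonneg hr.1.le _
      have h1 : r^(m+2) * Real.exp (r^2/4) * (w r/(p-1) + w r ^ p)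
          ≤ r^(m+2) * Real.exp 1 * M := by
        have hx : Real.exp (r^2/4) ≤ Real.exp 1 := by
          apply Real.exp_le_exp.2
          nlinarith [hr.1, hr.2]
        have hq := hsrc r hr
        have hq0 := hsrc0 r hr.1
        calc r^(m+2) * Real.exp (r^2/4) * (w r/(p-1) + w r ^ p)
            ≤ r^(m+2) * Real.exp 1 * (w r/(p-1) + w r ^ p) := by
              apply mul_le_mul_of_nonneg_right _ hq0
              exact mul_le_mul_of_nonneg_left hx hrp
          _ ≤ r^(m+2) * Real.exp 1 * M := by
              apply mul_le_mul_of_nonneg_left hq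
              exact mul_nonneg hrp (Real.exp_pos 1).le
      have h2 : K * r^(m+2) = r^(m+2) * Real.exp 1 * M := by rw [hKdef]; ring
      linarith
  -- F is nonnegative on Ioo 0 1
  have hFnonneg : ∀ r ∈ Ioo (0:ℝ) 1, 0 ≤ F r := by
    intro r₀ hr₀
    by_contra hneg
    push_neg at hneg
    obtain ⟨c, hcpos, hcF⟩ : ∃ c : ℝ, 0 < c ∧ F r₀ = -c := ⟨-F r₀, by linarith, by ring⟩
    obtain ⟨c', hc'pos, hc'def⟩ : ∃ c' : ℝ, 0 < c' ∧ c' = c / Real.exp 1 :=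
      ⟨c / Real.exp 1, div_pos hcpos (Real.exp_pos 1), rfl⟩
    -- derivative bound on (0, r₀]
    have hwb : ∀ r, 0 < r → r ≤ r₀ → deriv w r ≤ -(c' / r) := by
      intro r hrr hrle
      have hrmem : r ∈ Ioo (0:ℝ) 1 := ⟨hrr, lt_of_le_of_lt hrle hr₀.2⟩
      have hFle : F r ≤ F r₀ := hmono hrmem hr₀ hrle
      have hvle : r ^ (m+2) * Real.exp (r^2/4) * deriv w r ≤ -c := by
        have hpow : (0:ℝ) ≤ (K / (m+3)) * r ^ (m+3) := by
          have : (0:ℝ) ≤ r ^ (m+3) := pow_nonneg hrr.le _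
          have hm3 : (0:ℝ) < (m:ℝ)+3 := by positivity
          positivity
        rw [hFr r, hcF] at hFle
        linarith
      have hX : (0:ℝ) < r ^ (m+2) * Real.exp (r^2/4) :=
        mul_pos (pow_pos hrr _) (Real.exp_pos _)
      have hXle : r ^ (m+2) * Real.exp (r^2/4) ≤ r * Real.exp 1 := by
        have h1 : r ^ (m+2) ≤ r ^ 1 :=
          pow_le_pow_of_le_one hrmem.1.le hrmem.2.le (by omega)
        have h2 : Real.exp (r^2/4) ≤ Real.exp 1 := by
          apply Real.exp_le_exp.2
          nlinarith [hrmem.1, hrmem.2]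
        have := mul_le_mul h1 h2 (Real.exp_pos _).le (by nlinarith [hrmem.1])
        simpa using this
      have h1 : deriv w r ≤ -c / (r ^ (m+2) * Real.exp (r^2/4)) := by
        rw [le_div_iff₀ hX]
        nlinarith [hvle]
      have h2 : -c / (r ^ (m+2) * Real.exp (r^2/4)) ≤ -c / (r * Real.exp 1) := by
        rw [neg_div, neg_div, neg_le_neg_iff]
        exact div_le_div_of_nonneg_left hcpos.le hX hXle
      have h3 : -c / (r * Real.exp 1) = -(c'/r) := by
        rw [hc'def]
        field_simp
      linarith
    -- the function w + c' log is antitone on [ε, r₀]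
    obtain ⟨ε, hεpos, hεlt, hεexp⟩ : ∃ ε : ℝ, 0 < ε ∧ ε < r₀ ∧
        ε ≤ Real.exp (Real.log r₀ - (B+1)/c') := by
      refine ⟨min (r₀/2) (Real.exp (Real.log r₀ - (B+1)/c')),
        lt_min (by linarith [hr₀.1]) (Real.exp_pos _),
        lt_of_le_of_lt (min_le_left _ _) (by linarith [hr₀.1]), min_le_right _ _⟩
    have hgd : ∀ r ∈ Icc ε r₀, HasDerivAt (fun x => w x + c' * Real.log x)
        (deriv w r + c' * r⁻¹) r := by
      intro r hr
      have hr0 : 0 < r := lt_of_lt_of_le hεpos hr.1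
      exact (hdiff1 r hr0).add ((Real.hasDerivAt_log (ne_of_gt hr0)).const_mul c')
    have hanti : AntitoneOn (fun x => w x + c' * Real.log x) (Icc ε r₀) := by
      apply antitoneOn_of_deriv_nonpos (convex_Icc ε r₀)
      · exact fun r hr => (hgd r hr).continuousAt.continuousWithinAt
      · intro r hr
        rw [interior_Icc] at hr
        exact (hgd r (Ioo_subset_Icc_self hr)).differentiableAt.differentiableWithinAt
      · intro r hr
        rw [interior_Icc] at hr
        rw [(hgd r (Ioo_subset_Icc_self hr)).deriv]
        have hr0 : 0 < r := lt_of_lt_of_le hεpos hr.1.le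
        have h1 := hwb r hr0 hr.2.le
        have h2 : c' * r⁻¹ = c' / r := by ring
        linarith [h2.le, h2.ge]
    have hge := hanti (left_mem_Icc.2 hεlt.le) (right_mem_Icc.2 hεlt.le) hεlt.le
    have hlog : Real.log ε ≤ Real.log r₀ - (B+1)/c' := by
      calc Real.log ε ≤ Real.log (Real.exp (Real.log r₀ - (B+1)/c')) :=
            Real.log_le_log hεpos hεexp
        _ = Real.log r₀ - (B+1)/c' := Real.log_exp _
    have hwε : w ε ≤ B := hB ε ⟨hεpos, lt_trans hεlt hr₀.2⟩
    have hwr₀ : 0 < w r₀ := hpos r₀ hr₀.1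
    have hBc : c' * ((B+1)/c') = B + 1 := by field_simp
    have hmul := mul_le_mul_of_nonneg_left hlog hc'pos.le
    simp only at hge
    nlinarith [hge, hmul, hBc.le, hBc.ge]
  -- conclusion
  have hm3 : (0:ℝ) < (m:ℝ)+3 := by positivity
  refine ⟨K / (m+3), div_pos hK hm3, 1, one_pos, ?_⟩
  intro r hr0 hr1
  have hF := hFnonneg r ⟨hr0, hr1⟩
  have hwneg : deriv w r ≤ 0 := hdec r hr0
  rw [abs_of_nonpos hwneg]
  rw [hFr r] at hF
  have hexp : 1 ≤ Real.exp (r^2/4) := Real.one_le_exp (by positivity)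
  have hrp : 0 < r ^ (m+2) := pow_pos hr0 _
  have hpow : r ^ (m+3) = r ^ (m+2) * r := by ring
  rw [hpow] at hF
  -- r^(m+2) * E * w' + (K/(m+3)) * r^(m+2) * r ≥ 0, E ≥ 1, w' ≤ 0
  -- ⇒ r^(m+2) * w' ≥ r^(m+2) * E * w' ≥ -(K/(m+3)) r^(m+2) r ⇒ -w' ≤ (K/(m+3)) r
  have h1 : Real.exp (r^2/4) * deriv w r ≤ 1 * deriv w r :=
    mul_le_mul_of_nonpos_right hexp hwneg
  have h2 : r^(m+2) * (Real.exp (r^2/4) * deriv w r) ≤ r^(m+2) * (1 * deriv w r) :=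
    mul_le_mul_of_nonneg_left h1 hrp.le
  have h3 : r ^ (m+2) * (-(deriv w r)) ≤ r ^ (m+2) * ((K/(m+3)) * r) := by linarith
  have h4 := le_of_mul_le_mul_left h3 hrp
  linarith
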